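/- If gcd(ℓ, m) = 1, then B_n[ℓ] · B_n[m] = B_n, i.e., every braid is a product of an element of the level-ℓ congruence subgroup and an element of the level-m congruence subgroup. -/

import Mathlib

open Matrix FreeGroup

/-- The braid relations on `n` strands, with Artin generators indexed by `Fin (n-1)`. -/
def braidRels (n : ℕ) : Set (FreeGroup (Fin (n - 1))) :=
  {r | (∃ i j : Fin (n - 1), (i : ℕ) + 1 = (j : ℕ) ∧
          r = of i * of j * of i * (of j * of i * of j)⁻¹) ∨
       (∃ i j : Fin (n - 1), (i : ℕ) + 2 ≤ (j : ℕ) ∧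
          r = of i * of j * (of j * of i)⁻¹)}

/-- The braid group on `n` strands, as a presented group. -/
def BraidGroup (n : ℕ) : Type := PresentedGroup (braidRels n)

instance (n : ℕ) : Group (BraidGroup n) := by unfold BraidGroup; infer_instance

/-- The Artin generator `σ_{i+1}` of the braid group on `n` strands. -/
def σ {n : ℕ} (i : Fin (n - 1)) : BraidGroup n := PresentedGroup.of i

/-- The integral Burau matrix of the Artin generator `σ_{i+1}` (rows and columns `i`, `i+1`
in 0-indexed notation): the identity matrix with the block `[[2, -1], [1, 0]]` inserted. -/
def burauMat (n : ℕ) (i : ℕ) : Matrix (Fin n) (Fin n) ℤ :=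
  Matrix.of fun j k =>
    if (j : ℕ) = i ∧ (k : ℕ) = i then 2
    else if (j : ℕ) = i ∧ (k : ℕ) = i + 1 then -1
    else if (j : ℕ) = i + 1 ∧ (k : ℕ) = i then 1
    else if (j : ℕ) = i + 1 ∧ (k : ℕ) = i + 1 then 0
    else if j = k then 1 else 0

/-- `IsBurau ρ` asserts that `ρ` is the integral Burau representation (Burau at `t = -1`). -/
def IsBurau {n : ℕ} (ρ : BraidGroup n →* Matrix.GeneralLinearGroup (Fin n) ℤ) : Prop :=
  ∀ i : Fin (n - 1), (ρ (σ i) : Matrix (Fin n) (Fin n) ℤ) = burauMat n (i : ℕ)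

/-- Reduction modulo `ℓ` on `GL(n, ℤ)`. -/
def glMod (n ℓ : ℕ) :
    Matrix.GeneralLinearGroup (Fin n) ℤ →* Matrix.GeneralLinearGroup (Fin n) (ZMod ℓ) :=
  Units.map ((Int.castRingHom (ZMod ℓ)).mapMatrix.toMonoidHom)

/-- The level-`ℓ` congruence subgroup `B_n[ℓ]` of the braid group: the kernel of the
integral Burau representation reduced mod `ℓ`. -/
def braidCong {n : ℕ} (ρ : BraidGroup n →* Matrix.GeneralLinearGroup (Fin n) ℤ) (ℓ : ℕ) :
    Subgroup (BraidGroup n) :=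
  ((glMod n ℓ).comp ρ).ker

instance braidCong_normal {n : ℕ} (ρ : BraidGroup n →* Matrix.GeneralLinearGroup (Fin n) ℤ)
    (ℓ : ℕ) : (braidCong ρ ℓ).Normal :=
  MonoidHom.normal_ker _

section BurauAux
variable {R : Type} [CommRing R]

def uu (n i : ℕ) (j : Fin n) : R := if (j : ℕ) = i ∨ (j : ℕ) = i + 1 then 1 else 0
def vv (n i : ℕ) (k : Fin n) : R := if (k : ℕ) = i then 1 else if (k : ℕ) = i + 1 then -1 else 0

lemma burau_decomp (n i : ℕ) :
    (burauMat n i).map (Int.cast : ℤ → R)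
      = 1 + Matrix.of (fun j k => uu n i j * vv n i k) := by
  ext j k
  simp only [Matrix.map_apply, burauMat, Matrix.add_apply, Matrix.one_apply, Matrix.of_apply,
    uu, vv]
  by_cases hjk : j = k
  · subst hjk
    split_ifs <;> simp_all <;> first | omega | norm_num
  · have : (j : ℕ) ≠ (k : ℕ) := fun hc => hjk (Fin.ext hc)
    split_ifs <;> simp_all <;> omega

lemma EE_zero (n i : ℕ) (hi : i + 1 < n) :
    (Matrix.of (fun j k => uu n i j * vv n i k) : Matrix (Fin n) (Fin n) R)
      * Matrix.of (fun j k => uu n i j * vv n i k) = 0 := by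
  have key : ∑ x : Fin n, (vv n i x * uu n i x : R) = 0 := by
    have hfx : ∀ x : Fin n, (vv n i x * uu n i x : R)
        = (if x = (⟨i, by omega⟩ : Fin n) then 1 else 0)
          + (if x = (⟨i+1, hi⟩ : Fin n) then -1 else 0) := by
      intro x
      simp only [uu, vv, Fin.ext_iff]
      split_ifs <;> simp_all <;> omega
    simp only [hfx, Finset.sum_add_distrib, Finset.sum_ite_eq', Finset.mem_univ, if_true]
    have : (⟨i, by omega⟩ : Fin n) ≠ ⟨i+1, hi⟩ := by simp [Fin.ext_iff]
    ring
  ext j k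
  simp only [Matrix.mul_apply, Matrix.of_apply, Matrix.zero_apply]
  have hterm : ∀ x : Fin n, (uu n i j * vv n i x * (uu n i x * vv n i k) : R)
      = uu n i j * vv n i k * (vv n i x * uu n i x) := fun x => by ring
  rw [Finset.sum_congr rfl (fun x _ => hterm x), ← Finset.mul_sum, key, mul_zero]

lemma burau_pow (n ℓ i : ℕ) (hi : i + 1 < n) :
    ((burauMat n i).map (Int.cast : ℤ → ZMod ℓ)) ^ ℓ = 1 := by
  set E : Matrix (Fin n) (Fin n) (ZMod ℓ) := Matrix.of (fun j k => uu n i j * vv n i k) with hE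
  have hdec := burau_decomp (R := ZMod ℓ) n i
  have hE2 : E * E = 0 := EE_zero n i hi
  have hpow : ∀ k : ℕ, ((burauMat n i).map (Int.cast : ℤ → ZMod ℓ)) ^ k = 1 + (k : ZMod ℓ) • E := by
    intro k
    induction k with
    | zero => simp
    | succ k ih =>
      rw [pow_succ, ih, hdec, ← hE, mul_add, add_mul, add_mul]
      simp only [smul_mul_assoc, hE2, smul_zero, mul_one, one_mul]
      push_cast
      rw [add_smul, one_smul]
      abel
  rw [hpow ℓ]
  simp [ZMod.natCast_self]

end BurauAux

lemma sigma_pow_mem {n : ℕ} (ρ : BraidGroup n →* Matrix.GeneralLinearGroup (Fin n) ℤ)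
    (hρ : IsBurau ρ) (ℓ : ℕ) (i : Fin (n - 1)) : (σ i) ^ ℓ ∈ braidCong ρ ℓ := by
  have hi : (i : ℕ) + 1 < n := by have := i.isLt; omega
  have : (glMod n ℓ) (ρ (σ i)) ^ ℓ = 1 := by
    apply Units.ext
    show (((glMod n ℓ) (ρ (σ i)) : Matrix (Fin n) (Fin n) (ZMod ℓ)))^ℓ = 1
    have hcoe : ((glMod n ℓ) (ρ (σ i)) : Matrix (Fin n) (Fin n) (ZMod ℓ))
        = (burauMat n (i : ℕ)).map (Int.cast : ℤ → ZMod ℓ) := by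
      rw [← hρ i]; rfl
    rw [hcoe, burau_pow n ℓ i hi]
  simpa [braidCong, MonoidHom.mem_ker, map_pow] using this

open Pointwise in
theorem braidCong_mul_coprime {n : ℕ} (ρ : BraidGroup n →* Matrix.GeneralLinearGroup (Fin n) ℤ)
    (hρ : IsBurau ρ) (ℓ m : ℕ) (hℓ : 0 < ℓ) (hm : 0 < m) (h : Nat.gcd ℓ m = 1) :
    (braidCong ρ ℓ : Set (BraidGroup n)) * (braidCong ρ m : Set (BraidGroup n)) =
      Set.univ := by
  rw [← Subgroup.normal_mul, Subgroup.coe_eq_univ, eq_top_iff]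
  refine le_trans (b := Subgroup.closure (Set.range (PresentedGroup.of (rels := braidRels n)) : Set (BraidGroup n)))
    (PresentedGroup.closure_range_of (rels := braidRels n)).ge ?_
  rw [Subgroup.closure_le]
  rintro x ⟨i, rfl⟩
  obtain ⟨a, b, hab⟩ : IsCoprime (ℓ : ℤ) (m : ℤ) := Nat.isCoprime_iff_coprime.mpr h
  have hx : (PresentedGroup.of i : BraidGroup n) = σ i := rfl
  have key : (σ i : BraidGroup n) = ((σ i) ^ ℓ) ^ a * ((σ i) ^ m) ^ b := by
    rw [← zpow_natCast (σ i) ℓ, ← zpow_natCast (σ i) m, ← _root_.zpow_mul, ← _root_.zpow_mul, ← _root_.zpow_add,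
      show (ℓ : ℤ) * a + (m : ℤ) * b = 1 by linarith, zpow_one]
  show (PresentedGroup.of i : BraidGroup n) ∈ (braidCong ρ ℓ ⊔ braidCong ρ m : Subgroup _)
  rw [hx, key]
  exact mul_mem
    (Subgroup.mem_sup_left (Subgroup.zpow_mem _ (sigma_pow_mem ρ hρ ℓ i) a))
    (Subgroup.mem_sup_right (Subgroup.zpow_mem _ (sigma_pow_mem ρ hρ m i) b))
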